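/- arXiv:2510.13036 — 2 statements merged into one kernel-verified Lean document; each statement's English description precedes it below -/
import Mathlib

section
/- If two reward functions r̂ and r induce identical regret-based orderings on all trajectory pairs (τ1, τ2) with τ1 in the support of an optimal policy π* for r̂ and τ2 in the support of a reference policy π_ref, then the expected return of π* under r is at least the expected return of π_ref under r: J_r(π*_{r̂}) ≥ J_r(π_ref). -/
open Finset

/-- Transition dynamics of a finite MDP (reward supplied separately). -/
structure Dyn (S A : Type) [Fintype S] where
  P : S → A → S → ℝ
  nonneg : ∀ s a s', 0 ≤ P s a s'
  sum_one : ∀ s a, ∑ s' : S, P s a s' = 1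

variable {S A : Type} [Fintype S] [Fintype A] [DecidableEq S] [Nonempty A]

/-- Optimal value function with `h` steps to go. -/
noncomputable def Vopt (D : Dyn S A) (r : S → A → S → ℝ) (γ : ℝ) : ℕ → S → ℝ
  | 0, _ => 0
  | h + 1, s => Finset.univ.sup' Finset.univ_nonempty
      (fun a => ∑ s' : S, D.P s a s' * (r s a s' + γ * Vopt D r γ h s'))

/-- Optimal action-value function: `h` is the number of steps remaining *after* this step. -/
noncomputable def Qopt (D : Dyn S A) (r : S → A → S → ℝ) (γ : ℝ) (h : ℕ) (s : S) (a : A) : ℝ :=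
  ∑ s' : S, D.P s a s' * (r s a s' + γ * Vopt D r γ h s')

/-- Value of a stochastic policy with `h` steps to go. -/
noncomputable def Vpi (D : Dyn S A) (r : S → A → S → ℝ) (γ : ℝ) (π : S → A → ℝ) : ℕ → S → ℝ
  | 0, _ => 0
  | h + 1, s => ∑ a : A, π s a * ∑ s' : S, D.P s a s' * (r s a s' + γ * Vpi D r γ π h s')

/-- A length-`H` trajectory: `H+1` states and `H` actions. -/
def Traj (S A : Type) (H : ℕ) : Type := (Fin (H + 1) → S) × (Fin H → A)

noncomputable instance (S A : Type) [Fintype S] [Fintype A] (H : ℕ) :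
    Fintype (Traj S A H) := by
  unfold Traj; infer_instance

/-- Probability of a trajectory under policy `π` started at `s0`. -/
noncomputable def trajProb (D : Dyn S A) (π : S → A → ℝ) (s0 : S) {H : ℕ}
    (τ : Traj S A H) : ℝ :=
  (if τ.1 0 = s0 then (1 : ℝ) else 0) *
    ∏ t : Fin H, π (τ.1 t.castSucc) (τ.2 t) * D.P (τ.1 t.castSucc) (τ.2 t) (τ.1 t.succ)

/-- Discounted return of a trajectory. -/
noncomputable def trajReturn (r : S → A → S → ℝ) (γ : ℝ) {H : ℕ} (τ : Traj S A H) : ℝ :=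
  ∑ t : Fin H, γ ^ (t : ℕ) * r (τ.1 t.castSucc) (τ.2 t) (τ.1 t.succ)

/-- Regret of a trajectory: sum of discounted negative optimal advantages. -/
noncomputable def trajRegret (D : Dyn S A) (r : S → A → S → ℝ) (γ : ℝ) {H : ℕ}
    (τ : Traj S A H) : ℝ :=
  ∑ t : Fin H, γ ^ (t : ℕ) *
    (Vopt D r γ (H - t) (τ.1 t.castSucc) - Qopt D r γ (H - 1 - t) (τ.1 t.castSucc) (τ.2 t))

/-- Expected discounted return of a policy from `s0` over horizon `H`. -/
noncomputable def Jret (D : Dyn S A) (r : S → A → S → ℝ) (γ : ℝ) (π : S → A → ℝ)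
    (s0 : S) (H : ℕ) : ℝ :=
  ∑ τ : Traj S A H, trajProb D π s0 τ * trajReturn r γ τ

/-! ### Auxiliary lemmas -/

/-- Prepend one step to a trajectory. -/
def consTraj (s : S) (a : A) {H : ℕ} (τ : Traj S A H) : Traj S A (H + 1) :=
  (Fin.cons s τ.1, Fin.cons a τ.2)

lemma trajProb_cons (D : Dyn S A) (π : S → A → ℝ) (s0 s : S) (a : A) {H : ℕ}
    (τ : Traj S A H) :
    trajProb D π s0 (consTraj s a τ)
      = (if s = s0 then (1:ℝ) else 0) * (π s a * D.P s a (τ.1 0)) *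
          trajProb D π (τ.1 0) τ := by
  unfold trajProb consTraj
  rw [Fin.prod_univ_succ]
  simp only [Fin.cons_zero, Fin.cons_succ, Fin.castSucc_zero, ← Fin.succ_castSucc]
  simp only [if_true]
  ring

lemma trajReturn_cons (r : S → A → S → ℝ) (γ : ℝ) (s : S) (a : A) {H : ℕ}
    (τ : Traj S A H) :
    trajReturn r γ (consTraj s a τ) = r s a (τ.1 0) + γ * trajReturn r γ τ := by
  unfold trajReturn consTraj
  rw [Fin.sum_univ_succ]
  simp only [Fin.cons_zero, Fin.cons_succ, Fin.castSucc_zero, ← Fin.succ_castSucc,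
    Fin.val_succ, Fin.val_zero, pow_zero, one_mul, pow_succ, Finset.mul_sum]
  congr 1
  refine Finset.sum_congr rfl fun i _ => by ring

lemma trajRegret_cons (D : Dyn S A) (r : S → A → S → ℝ) (γ : ℝ) (s : S) (a : A) {H : ℕ}
    (τ : Traj S A H) :
    trajRegret D r γ (consTraj s a τ)
      = (Vopt D r γ (H + 1) s - Qopt D r γ H s a) + γ * trajRegret D r γ τ := by
  unfold trajRegret consTraj
  rw [Fin.sum_univ_succ]
  simp only [Fin.cons_zero, Fin.cons_succ, Fin.castSucc_zero, ← Fin.succ_castSucc,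
    Fin.val_succ, Fin.val_zero, pow_zero, one_mul, pow_succ, Finset.mul_sum]
  have h1 : H + 1 - 0 = H + 1 := rfl
  have h2 : H + 1 - 1 - 0 = H := rfl
  rw [h1, h2]
  congr 1
  refine Finset.sum_congr rfl fun i _ => ?_
  have e1 : H + 1 - ((i : ℕ) + 1) = H - (i : ℕ) := by omega
  have e2 : H + 1 - 1 - ((i : ℕ) + 1) = H - 1 - (i : ℕ) := by omega
  rw [e1, e2]; ring

lemma trajProb_nonneg (D : Dyn S A) (π : S → A → ℝ) (hπ : ∀ s a, 0 ≤ π s a)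
    (s0 : S) {H : ℕ} (τ : Traj S A H) : 0 ≤ trajProb D π s0 τ := by
  unfold trajProb
  apply mul_nonneg
  · split <;> norm_num
  · exact Finset.prod_nonneg fun t _ => mul_nonneg (hπ _ _) (D.nonneg _ _ _)

lemma trajProb_eq_zero_of_start (D : Dyn S A) (π : S → A → ℝ) (s0 : S) {H : ℕ}
    (τ : Traj S A H) (h : τ.1 0 ≠ s0) : trajProb D π s0 τ = 0 := by
  unfold trajProb; rw [if_neg h, zero_mul]

/-- Reindexing of length-`H+1` trajectories by (first state, first action, tail). -/
def trajConsEquiv (S A : Type) (H : ℕ) : S × A × Traj S A H ≃ Traj S A (H + 1) where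
  toFun x := consTraj x.1 x.2.1 x.2.2
  invFun τ := (τ.1 0, τ.2 0, (Fin.tail τ.1, Fin.tail τ.2))
  left_inv := by
    rintro ⟨s, a, f, g⟩
    simp [consTraj, Fin.tail_cons]
  right_inv := by
    rintro ⟨f, g⟩
    simp [consTraj, Fin.cons_self_tail]
    rfl

/-- Key structural lemma: decompose a trajectory expectation along the first step. -/
lemma sum_traj_succ (D : Dyn S A) (π : S → A → ℝ) (s0 : S) {H : ℕ}
    (F : Traj S A (H + 1) → ℝ) :
    ∑ τ : Traj S A (H + 1), trajProb D π s0 τ * F τ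
      = ∑ a : A, π s0 a * ∑ s1 : S, D.P s0 a s1 *
          ∑ τ' : Traj S A H, trajProb D π s1 τ' * F (consTraj s0 a τ') := by
  classical
  rw [← (trajConsEquiv S A H).sum_comp (fun τ => trajProb D π s0 τ * F τ),
    Fintype.sum_prod_type]
  refine Eq.trans (Finset.sum_eq_single s0 ?_ ?_) ?_
  · intro s _ hne
    apply Finset.sum_eq_zero
    rintro ⟨a, τ'⟩ _
    have he : trajConsEquiv S A H (s, a, τ') = consTraj s a τ' := rfl
    rw [he, trajProb_cons, if_neg hne]
    ring
  · intro h; exact absurd (Finset.mem_univ _) h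
  · rw [Fintype.sum_prod_type]
    refine Finset.sum_congr rfl fun a _ => ?_
    rw [Finset.mul_sum]
    have rhs_eq : ∀ s1 : S, π s0 a * (D.P s0 a s1 *
          ∑ τ' : Traj S A H, trajProb D π s1 τ' * F (consTraj s0 a τ'))
        = ∑ τ' : Traj S A H,
            π s0 a * (D.P s0 a s1 * (trajProb D π s1 τ' * F (consTraj s0 a τ'))) := by
      intro s1
      rw [Finset.mul_sum, Finset.mul_sum]
    rw [Finset.sum_congr rfl fun s1 _ => rhs_eq s1, Finset.sum_comm]
    refine Finset.sum_congr rfl fun τ' _ => ?_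
    have he : trajConsEquiv S A H (s0, a, τ') = consTraj s0 a τ' := rfl
    rw [he, trajProb_cons, if_pos rfl, one_mul]
    rw [Finset.sum_eq_single (τ'.1 0)]
    · ring
    · intro s1 _ hne
      rw [trajProb_eq_zero_of_start D π s1 τ' (Ne.symm hne)]
      ring
    · intro h; exact absurd (Finset.mem_univ _) h

/-- Length-0 trajectories are just a start state. -/
def trajZeroEquiv (S A : Type) : Traj S A 0 ≃ S where
  toFun τ := τ.1 0
  invFun s := (fun _ => s, fun i => i.elim0)
  left_inv := by
    rintro ⟨f, g⟩
    refine Prod.ext ?_ ?_ <;> funext i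
    · have : i = 0 := Fin.fin_one_eq_zero i
      rw [this]
    · exact i.elim0
  right_inv s := rfl

lemma sum_trajProb (D : Dyn S A) (π : S → A → ℝ) (hπ1 : ∀ s, ∑ a : A, π s a = 1) :
    ∀ (H : ℕ) (s0 : S), ∑ τ : Traj S A H, trajProb D π s0 τ = 1
  | 0, s0 => by
      rw [← (trajZeroEquiv S A).symm.sum_comp (fun τ => trajProb D π s0 τ)]
      have h : ∀ s : S, trajProb D π s0 ((trajZeroEquiv S A).symm s)
          = if s = s0 then 1 else 0 := by
        intro s
        unfold trajProb trajZeroEquiv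
        simp
        rfl
      rw [Finset.sum_congr rfl fun s _ => h s, Finset.sum_ite_eq' Finset.univ s0,
        if_pos (Finset.mem_univ s0)]
  | H + 1, s0 => by
      have h := sum_traj_succ D π s0 (fun _ : Traj S A (H+1) => (1:ℝ))
      simp only [mul_one] at h
      rw [h]
      have inner : ∀ a : A, ∀ s1 : S,
          D.P s0 a s1 * ∑ τ' : Traj S A H, trajProb D π s1 τ' = D.P s0 a s1 := by
        intro a s1; rw [sum_trajProb D π hπ1 H s1, mul_one]
      calc ∑ a : A, π s0 a * ∑ s1 : S, D.P s0 a s1 * ∑ τ' : Traj S A H, trajProb D π s1 τ'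
          = ∑ a : A, π s0 a * ∑ s1 : S, D.P s0 a s1 := by
            refine Finset.sum_congr rfl fun a _ => ?_
            rw [Finset.sum_congr rfl fun s1 _ => inner a s1]
        _ = ∑ a : A, π s0 a := by
            refine Finset.sum_congr rfl fun a _ => by rw [D.sum_one, mul_one]
        _ = 1 := hπ1 s0

lemma Jret_eq_Vpi (D : Dyn S A) (r : S → A → S → ℝ) (γ : ℝ) (π : S → A → ℝ)
    (hπ1 : ∀ s, ∑ a : A, π s a = 1) :
    ∀ (H : ℕ) (s0 : S), Jret D r γ π s0 H = Vpi D r γ π H s0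
  | 0, s0 => by
      unfold Jret trajReturn
      simp [Vpi]
  | H + 1, s0 => by
      unfold Jret
      rw [sum_traj_succ]
      have inner : ∀ (a : A) (s1 : S),
          (∑ τ' : Traj S A H, trajProb D π s1 τ' * trajReturn r γ (consTraj s0 a τ'))
            = r s0 a s1 + γ * Vpi D r γ π H s1 := by
        intro a s1
        have step : ∀ τ' : Traj S A H,
            trajProb D π s1 τ' * trajReturn r γ (consTraj s0 a τ')
              = trajProb D π s1 τ' * (r s0 a s1 + γ * trajReturn r γ τ') := by
          intro τ'
          by_cases h : τ'.1 0 = s1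
          · rw [trajReturn_cons, h]
          · rw [trajProb_eq_zero_of_start D π s1 τ' h, zero_mul, zero_mul]
        rw [Finset.sum_congr rfl fun τ' _ => step τ']
        have expand : ∀ τ' : Traj S A H,
            trajProb D π s1 τ' * (r s0 a s1 + γ * trajReturn r γ τ')
              = trajProb D π s1 τ' * r s0 a s1
                + γ * (trajProb D π s1 τ' * trajReturn r γ τ') := fun τ' => by ring
        rw [Finset.sum_congr rfl fun τ' _ => expand τ', Finset.sum_add_distrib,
          ← Finset.sum_mul, ← Finset.mul_sum, sum_trajProb D π hπ1 H s1, one_mul]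
        have : (∑ τ' : Traj S A H, trajProb D π s1 τ' * trajReturn r γ τ')
            = Vpi D r γ π H s1 := Jret_eq_Vpi D r γ π hπ1 H s1
        rw [this]
      show _ = ∑ a : A, π s0 a * ∑ s' : S, D.P s0 a s' * (r s0 a s' + γ * Vpi D r γ π H s')
      refine Finset.sum_congr rfl fun a _ => ?_
      congr 1
      exact Finset.sum_congr rfl fun s1 _ => by rw [inner a s1]

lemma sum_regret_eq (D : Dyn S A) (r : S → A → S → ℝ) (γ : ℝ) (π : S → A → ℝ)
    (hπ1 : ∀ s, ∑ a : A, π s a = 1) :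
    ∀ (H : ℕ) (s0 : S),
      (∑ τ : Traj S A H, trajProb D π s0 τ * trajRegret D r γ τ)
        = Vopt D r γ H s0 - Vpi D r γ π H s0
  | 0, s0 => by
      unfold trajRegret
      simp [Vopt, Vpi]
  | H + 1, s0 => by
      rw [sum_traj_succ]
      have inner : ∀ (a : A) (s1 : S),
          (∑ τ' : Traj S A H, trajProb D π s1 τ' * trajRegret D r γ (consTraj s0 a τ'))
            = (Vopt D r γ (H + 1) s0 - Qopt D r γ H s0 a)
                + γ * (Vopt D r γ H s1 - Vpi D r γ π H s1) := by
        intro a s1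
        have expand : ∀ τ' : Traj S A H,
            trajProb D π s1 τ' * trajRegret D r γ (consTraj s0 a τ')
              = trajProb D π s1 τ' * (Vopt D r γ (H + 1) s0 - Qopt D r γ H s0 a)
                + γ * (trajProb D π s1 τ' * trajRegret D r γ τ') := by
          intro τ'
          rw [trajRegret_cons]; ring
        rw [Finset.sum_congr rfl fun τ' _ => expand τ', Finset.sum_add_distrib,
          ← Finset.sum_mul, ← Finset.mul_sum, sum_trajProb D π hπ1 H s1, one_mul,
          sum_regret_eq D r γ π hπ1 H s1]
      have per_a : ∀ a : A,
          (∑ s1 : S, D.P s0 a s1 *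
            ∑ τ' : Traj S A H, trajProb D π s1 τ' * trajRegret D r γ (consTraj s0 a τ'))
          = Vopt D r γ (H + 1) s0
              - ∑ s1 : S, D.P s0 a s1 * (r s0 a s1 + γ * Vpi D r γ π H s1) := by
        intro a
        rw [Finset.sum_congr rfl fun s1 _ => by rw [inner a s1]]
        have hQ : Qopt D r γ H s0 a
            = (∑ s1 : S, D.P s0 a s1 * r s0 a s1)
              + γ * ∑ s1 : S, D.P s0 a s1 * Vopt D r γ H s1 := by
          unfold Qopt
          rw [Finset.sum_congr rfl fun s1 _ =>
            (by ring : D.P s0 a s1 * (r s0 a s1 + γ * Vopt D r γ H s1)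
              = D.P s0 a s1 * r s0 a s1 + γ * (D.P s0 a s1 * Vopt D r γ H s1)),
            Finset.sum_add_distrib, ← Finset.mul_sum]
        have expand2 : ∀ s1 : S,
            D.P s0 a s1 * ((Vopt D r γ (H + 1) s0 - Qopt D r γ H s0 a)
                + γ * (Vopt D r γ H s1 - Vpi D r γ π H s1))
            = D.P s0 a s1 * (Vopt D r γ (H + 1) s0 - Qopt D r γ H s0 a)
              + (γ * (D.P s0 a s1 * Vopt D r γ H s1)
                - γ * (D.P s0 a s1 * Vpi D r γ π H s1)) := fun s1 => by ring
        have expand3 : ∀ s1 : S,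
            D.P s0 a s1 * (r s0 a s1 + γ * Vpi D r γ π H s1)
            = D.P s0 a s1 * r s0 a s1 + γ * (D.P s0 a s1 * Vpi D r γ π H s1) :=
          fun s1 => by ring
        rw [Finset.sum_congr rfl fun s1 _ => expand2 s1, Finset.sum_add_distrib,
          Finset.sum_sub_distrib, ← Finset.sum_mul, D.sum_one, one_mul,
          ← Finset.mul_sum, ← Finset.mul_sum,
          Finset.sum_congr rfl fun s1 _ => expand3 s1, Finset.sum_add_distrib,
          ← Finset.mul_sum, hQ]
        ring
      rw [Finset.sum_congr rfl fun a _ => by rw [per_a a]]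
      have hVpi : Vpi D r γ π (H + 1) s0
          = ∑ a : A, π s0 a * ∑ s1 : S, D.P s0 a s1 * (r s0 a s1 + γ * Vpi D r γ π H s1) :=
        rfl
      rw [hVpi]
      rw [Finset.sum_congr rfl fun a _ =>
        (by ring : π s0 a * (Vopt D r γ (H + 1) s0
            - ∑ s1 : S, D.P s0 a s1 * (r s0 a s1 + γ * Vpi D r γ π H s1))
          = π s0 a * Vopt D r γ (H + 1) s0
            - π s0 a * ∑ s1 : S, D.P s0 a s1 * (r s0 a s1 + γ * Vpi D r γ π H s1)),
        Finset.sum_sub_distrib, ← Finset.sum_mul, hπ1, one_mul]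

lemma Qopt_le_Vopt (D : Dyn S A) (r : S → A → S → ℝ) (γ : ℝ) (h : ℕ) (s : S) (a : A) :
    Qopt D r γ h s a ≤ Vopt D r γ (h + 1) s :=
  Finset.le_sup' (fun a => ∑ s' : S, D.P s a s' * (r s a s' + γ * Vopt D r γ h s'))
    (Finset.mem_univ a)

lemma trajRegret_nonneg (D : Dyn S A) (r : S → A → S → ℝ) (γ : ℝ) (hγ : 0 ≤ γ)
    {H : ℕ} (τ : Traj S A H) : 0 ≤ trajRegret D r γ τ := by
  apply Finset.sum_nonneg
  intro t _
  apply mul_nonneg (pow_nonneg hγ _)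
  have ht : H - (t : ℕ) = (H - 1 - (t : ℕ)) + 1 := by have := t.isLt; omega
  rw [ht, sub_nonneg]
  exact Qopt_le_Vopt D r γ _ _ _
/-- if the repaired reward `rhat` and the ground truth `r` induce identical
regret-based orderings on all inter-policy trajectory pairs (support of an optimal policy
for `rhat` versus support of the reference policy), then `J_r(π*_{rhat}) ≥ J_r(π_ref)`. -/
theorem ranking_agreement_implies_return_dominance
    (D : Dyn S A) (rhat r : S → A → S → ℝ) (γ : ℝ) (hγ : 0 ≤ γ)
    (H : ℕ) (s0 : S) (πstar πref : S → A → ℝ)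
    (hπs0 : ∀ s a, 0 ≤ πstar s a) (hπs1 : ∀ s, ∑ a : A, πstar s a = 1)
    (hπr0 : ∀ s a, 0 ≤ πref s a) (hπr1 : ∀ s, ∑ a : A, πref s a = 1)
    -- `πstar` is optimal for `rhat`: every trajectory in its support has zero regret under `rhat`
    (hopt : ∀ τ : Traj S A H, 0 < trajProb D πstar s0 τ → trajRegret D rhat γ τ = 0)
    -- identical regret-based orderings on all inter-policy trajectory pairs
    (hsign : ∀ τ1 τ2 : Traj S A H, 0 < trajProb D πstar s0 τ1 →
      0 < trajProb D πref s0 τ2 →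
      Real.sign (trajRegret D rhat γ τ1 - trajRegret D rhat γ τ2)
        = Real.sign (trajRegret D r γ τ1 - trajRegret D r γ τ2)) :
    Jret D r γ πref s0 H ≤ Jret D r γ πstar s0 H := by
  classical
  have hJr : Jret D r γ πref s0 H = Vpi D r γ πref H s0 := Jret_eq_Vpi D r γ πref hπr1 H s0
  have hJs : Jret D r γ πstar s0 H = Vpi D r γ πstar H s0 := Jret_eq_Vpi D r γ πstar hπs1 H s0
  have hRr : (∑ τ : Traj S A H, trajProb D πref s0 τ * trajRegret D r γ τ)
      = Vopt D r γ H s0 - Vpi D r γ πref H s0 := sum_regret_eq D r γ πref hπr1 H s0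
  have hRs : (∑ τ : Traj S A H, trajProb D πstar s0 τ * trajRegret D r γ τ)
      = Vopt D r γ H s0 - Vpi D r γ πstar H s0 := sum_regret_eq D r γ πstar hπs1 H s0
  -- pointwise comparison of regrets on supports
  have key : ∀ τ1 τ2 : Traj S A H, 0 < trajProb D πstar s0 τ1 → 0 < trajProb D πref s0 τ2 →
      trajRegret D r γ τ1 ≤ trajRegret D r γ τ2 := by
    intro τ1 τ2 h1 h2
    have hx : trajRegret D rhat γ τ1 - trajRegret D rhat γ τ2 ≤ 0 := by
      rw [hopt τ1 h1, zero_sub, neg_nonpos]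
      exact trajRegret_nonneg D rhat γ hγ τ2
    have hs := hsign τ1 τ2 h1 h2
    rcases lt_or_eq_of_le hx with hlt | heq
    · rw [Real.sign_of_neg hlt] at hs
      by_contra hcon
      push_neg at hcon
      rw [Real.sign_of_pos (by linarith : (0:ℝ) < trajRegret D r γ τ1 - trajRegret D r γ τ2)]
        at hs
      norm_num at hs
    · rw [heq, Real.sign_zero] at hs
      have := Real.sign_eq_zero_iff.mp hs.symm
      linarith
  -- expected regret comparison via a product-sum argument
  have hER : (∑ τ : Traj S A H, trajProb D πstar s0 τ * trajRegret D r γ τ)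
      ≤ ∑ τ : Traj S A H, trajProb D πref s0 τ * trajRegret D r γ τ := by
    calc (∑ τ1 : Traj S A H, trajProb D πstar s0 τ1 * trajRegret D r γ τ1)
        = ∑ τ1 : Traj S A H, ∑ τ2 : Traj S A H,
            trajProb D πstar s0 τ1 * trajRegret D r γ τ1 * trajProb D πref s0 τ2 := by
          refine Finset.sum_congr rfl fun τ1 _ => ?_
          rw [← Finset.mul_sum, sum_trajProb D πref hπr1 H s0, mul_one]
      _ ≤ ∑ τ1 : Traj S A H, ∑ τ2 : Traj S A H,
            trajProb D πstar s0 τ1 * trajRegret D r γ τ2 * trajProb D πref s0 τ2 := by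
          refine Finset.sum_le_sum fun τ1 _ => Finset.sum_le_sum fun τ2 _ => ?_
          rcases (trajProb_nonneg D πstar hπs0 s0 τ1).lt_or_eq with h1 | h1
          · rcases (trajProb_nonneg D πref hπr0 s0 τ2).lt_or_eq with h2 | h2
            · exact mul_le_mul_of_nonneg_right
                (mul_le_mul_of_nonneg_left (key τ1 τ2 h1 h2) h1.le) h2.le
            · rw [← h2, mul_zero, mul_zero]
          · rw [← h1, zero_mul, zero_mul, zero_mul, zero_mul]
      _ = ∑ τ2 : Traj S A H, trajProb D πref s0 τ2 * trajRegret D r γ τ2 := by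
          rw [Finset.sum_comm]
          refine Finset.sum_congr rfl fun τ2 _ => ?_
          have : ∀ τ1 : Traj S A H,
              trajProb D πstar s0 τ1 * trajRegret D r γ τ2 * trajProb D πref s0 τ2
              = trajProb D πstar s0 τ1 * (trajRegret D r γ τ2 * trajProb D πref s0 τ2) :=
            fun τ1 => by ring
          rw [Finset.sum_congr rfl fun τ1 _ => this τ1, ← Finset.sum_mul,
            sum_trajProb D πstar hπs1 H s0, one_mul]
          ring
  rw [hJr, hJs]
  linarith [hRr, hRs, hER]
end

section
/- For trajectories that begin and end in the same states in an MDP with deterministic transitions, the regret-based preference ordering coincides with the return-based preference ordering: regret(τ1 | r) < regret(τ2 | r) if and only if r(τ1) > r(τ2), where r(τ) is the discounted sum of rewards along τ and both trajectories have the same length H. -/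
open Finset

variable {S A : Type} [Fintype S] [Fintype A] [DecidableEq S] [Nonempty A]

lemma fin_telescope (n : ℕ) (f : Fin (n + 1) → ℝ) :
    ∑ i : Fin n, (f i.castSucc - f i.succ) = f 0 - f (Fin.last n) := by
  induction n with
  | zero => simp
  | succ n ih =>
    rw [Fin.sum_univ_castSucc]
    have h := ih (fun i => f i.castSucc)
    simp only [Fin.succ_castSucc] at h ⊢
    rw [h]
    have h1 : (Fin.last n).succ = Fin.last (n + 1) := rfl
    have h2 : (Fin.castSucc 0 : Fin (n + 2)) = 0 := rfl
    rw [h1, h2]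
    ring

lemma Qopt_det (D : Dyn S A) (r : S → A → S → ℝ) (γ : ℝ) (h : ℕ) (s : S) (a : A) (s' : S)
    (hdet : ∀ s a, ∃ s', ∀ s'', D.P s a s'' = if s'' = s' then 1 else 0)
    (h1 : D.P s a s' = 1) :
    Qopt D r γ h s a = r s a s' + γ * Vopt D r γ h s' := by
  obtain ⟨t, ht⟩ := hdet s a
  have hs : s' = t := by
    by_contra hne
    rw [ht s', if_neg hne] at h1
    norm_num at h1
  subst hs
  simp [Qopt, ht, ite_mul]

lemma regret_eq (D : Dyn S A) (r : S → A → S → ℝ) (γ : ℝ) {H : ℕ} (τ : Traj S A H)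
    (hdet : ∀ s a, ∃ s', ∀ s'', D.P s a s'' = if s'' = s' then 1 else 0)
    (hfeas : ∀ t : Fin H, D.P (τ.1 t.castSucc) (τ.2 t) (τ.1 t.succ) = 1) :
    trajRegret D r γ τ = Vopt D r γ H (τ.1 0) - trajReturn r γ τ := by
  set f : Fin (H + 1) → ℝ := fun i => γ ^ (i : ℕ) * Vopt D r γ (H - i) (τ.1 i) with hf
  have key : ∀ t : Fin H,
      γ ^ (t : ℕ) *
        (Vopt D r γ (H - t) (τ.1 t.castSucc) - Qopt D r γ (H - 1 - t) (τ.1 t.castSucc) (τ.2 t))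
      = (f t.castSucc - f t.succ)
        - γ ^ (t : ℕ) * r (τ.1 t.castSucc) (τ.2 t) (τ.1 t.succ) := by
    intro t
    rw [Qopt_det D r γ (H - 1 - t) _ _ _ hdet (hfeas t)]
    simp only [hf, Fin.coe_castSucc, Fin.val_succ]
    have h1 : H - ((t : ℕ) + 1) = H - 1 - t := by omega
    rw [h1, pow_succ]
    ring
  have hsum : trajRegret D r γ τ
      = (∑ t : Fin H, (f t.castSucc - f t.succ)) - trajReturn r γ τ := by
    rw [trajRegret, trajReturn, ← Finset.sum_sub_distrib]
    exact Finset.sum_congr rfl fun t _ => key t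
  rw [hsum, fin_telescope]
  have h0 : f 0 = Vopt D r γ H (τ.1 0) := by simp [hf]
  have hl : f (Fin.last H) = 0 := by simp [hf, Vopt]
  rw [h0, hl]
  ring

/-- in an MDP with deterministic transitions, for two dynamically feasible
trajectories of the same length `H` that begin and end in the same states, the regret-based
ordering coincides with the return-based ordering. -/
theorem regret_order_iff_return_order
    (D : Dyn S A) (r : S → A → S → ℝ) (γ : ℝ) (hγ : 0 ≤ γ)
    (H : ℕ) (s0 sH : S) (τ1 τ2 : Traj S A H)
    -- deterministic transitions
    (hdet : ∀ s a, ∃ s', ∀ s'', D.P s a s'' = if s'' = s' then 1 else 0)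
    -- both trajectories start at `s0` and end at `sH`
    (h1s : τ1.1 0 = s0) (h2s : τ2.1 0 = s0)
    (h1e : τ1.1 (Fin.last H) = sH) (h2e : τ2.1 (Fin.last H) = sH)
    -- both trajectories are consistent with the dynamics
    (hfeas1 : ∀ t : Fin H, D.P (τ1.1 t.castSucc) (τ1.2 t) (τ1.1 t.succ) = 1)
    (hfeas2 : ∀ t : Fin H, D.P (τ2.1 t.castSucc) (τ2.2 t) (τ2.1 t.succ) = 1) :
    trajRegret D r γ τ1 < trajRegret D r γ τ2 ↔ trajReturn r γ τ2 < trajReturn r γ τ1 := by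
  rw [regret_eq D r γ τ1 hdet hfeas1, regret_eq D r γ τ2 hdet hfeas2, h1s, h2s]
  constructor <;> intro h <;> linarith
end
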